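/- The approximate depth computed by ball intersections never exceeds the exact Tukey depth: for a sample point x, if x belongs to the discrete approximation Ŝ_{k/n} (an intersection of finitely many balls each containing at least n−k+1 sample points, intersected with the data set), then the exact Tukey depth of x is at least k/n. -/

import Mathlib

open scoped RealInnerProductSpace

def IsOpenHalfspace {d : ℕ} (H : Set (EuclideanSpace ℝ (Fin d))) : Prop :=
  ∃ (u : EuclideanSpace ℝ (Fin d)) (c : ℝ), u ≠ 0 ∧ H = {y | c < ⟪u, y⟫}

theorem mem_all_balls_imp_depth_ge (d n k : ℕ) (hn : 0 < n) (hk1 : 1 ≤ k) (hkn : k ≤ n)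
    (x : Fin n → EuclideanSpace ℝ (Fin d)) (p : EuclideanSpace ℝ (Fin d))
    (hp : ∀ (c : EuclideanSpace ℝ (Fin d)) (r : ℝ), 0 ≤ r →
      n - k + 1 ≤ {i : Fin n | x i ∈ Metric.closedBall c r}.ncard →
      p ∈ Metric.closedBall c r) :
    ∀ H : Set (EuclideanSpace ℝ (Fin d)), IsOpenHalfspace H → p ∈ H →
      (k : ℝ) / n ≤ ({i : Fin n | x i ∈ H}.ncard : ℝ) / n := by
  rintro H ⟨u, c, hu, rfl⟩ hpH
  simp only [Set.mem_setOf_eq] at hpH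
  have hu2 : (0:ℝ) < ‖u‖ ^ 2 := by
    have := norm_pos_iff.mpr hu
    positivity
  set p₀ : EuclideanSpace ℝ (Fin d) := (c / ‖u‖ ^ 2) • u with hp₀
  have hip0 : ⟪u, p₀⟫ = c := by
    rw [hp₀, real_inner_smul_right, real_inner_self_eq_norm_sq]
    field_simp
  have hne : (Finset.univ : Finset (Fin n)).Nonempty := ⟨⟨0, hn⟩, Finset.mem_univ _⟩
  set M : ℝ := Finset.univ.sup' hne (fun i => ‖x i - p₀‖ ^ 2) with hM
  have hM0 : 0 ≤ M := le_trans (sq_nonneg _)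
    (Finset.le_sup' (fun i => ‖x i - p₀‖ ^ 2) (Finset.mem_univ ⟨0, hn⟩))
  have hMle : ∀ i : Fin n, ‖x i - p₀‖ ^ 2 ≤ M := fun i =>
    Finset.le_sup' (fun i => ‖x i - p₀‖ ^ 2) (Finset.mem_univ i)
  set δ : ℝ := ⟪u, p⟫ - c with hδdef
  have hδ : 0 < δ := sub_pos.mpr hpH
  set t : ℝ := (M + 1) / (2 * δ) with ht
  have ht0 : 0 < t := by positivity
  have h2tδ : 2 * t * δ = M + 1 := by
    rw [ht]; field_simp
  set z : EuclideanSpace ℝ (Fin d) := p₀ - t • u with hz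
  set r : ℝ := Real.sqrt (M + t ^ 2 * ‖u‖ ^ 2) with hr
  have hr0 : 0 ≤ r := Real.sqrt_nonneg _
  have hr2 : r ^ 2 = M + t ^ 2 * ‖u‖ ^ 2 := Real.sq_sqrt (by positivity)
  have hdist : ∀ a : EuclideanSpace ℝ (Fin d),
      ‖a - z‖ ^ 2 = ‖a - p₀‖ ^ 2 + 2 * t * (⟪u, a⟫ - c) + t ^ 2 * ‖u‖ ^ 2 := by
    intro a
    have h1 : a - z = (a - p₀) + t • u := by rw [hz]; abel
    rw [h1, norm_add_sq_real, real_inner_smul_right, inner_sub_left]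
    have h2 : ⟪a, u⟫ = ⟪u, a⟫ := real_inner_comm _ _
    have h3 : ⟪p₀, u⟫ = c := by rw [real_inner_comm]; exact hip0
    have h4 : ‖t • u‖ ^ 2 = t ^ 2 * ‖u‖ ^ 2 := by
      rw [norm_smul, mul_pow, Real.norm_eq_abs, sq_abs]
    rw [h2, h3, h4]; ring
  -- key counting claim
  have key : {i : Fin n | ¬ (c < ⟪u, x i⟫)}.ncard ≤ n - k := by
    by_contra hcon
    rw [not_le] at hcon
    have hsub : {i : Fin n | ¬ (c < ⟪u, x i⟫)} ⊆
        {i : Fin n | x i ∈ Metric.closedBall z r} := by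
      intro i hi
      simp only [Set.mem_setOf_eq, not_lt] at hi
      simp only [Set.mem_setOf_eq, Metric.mem_closedBall]
      have hd2 : dist (x i) z ^ 2 ≤ M + t ^ 2 * ‖u‖ ^ 2 := by
        rw [dist_eq_norm, hdist (x i)]
        have := hMle i
        nlinarith
      calc dist (x i) z = Real.sqrt (dist (x i) z ^ 2) :=
            (Real.sqrt_sq dist_nonneg).symm
        _ ≤ r := Real.sqrt_le_sqrt hd2
    have hcard : n - k + 1 ≤ {i : Fin n | x i ∈ Metric.closedBall z r}.ncard :=
      le_trans hcon (Set.ncard_le_ncard hsub (Set.toFinite _))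
    have hmem := hp z r hr0 hcard
    rw [Metric.mem_closedBall] at hmem
    have hd2 : dist p z ^ 2 ≤ r ^ 2 := by
      have := dist_nonneg (x := p) (y := z)
      nlinarith
    rw [dist_eq_norm, hdist p, hr2] at hd2
    nlinarith [sq_nonneg ‖p - p₀‖, h2tδ]
  -- finish counting
  have hcompl : {i : Fin n | x i ∈ {y | c < ⟪u, y⟫}}ᶜ = {i : Fin n | ¬ (c < ⟪u, x i⟫)} := by
    ext i; simp [Set.mem_setOf_eq]
  have hsum : {i : Fin n | x i ∈ {y | c < ⟪u, y⟫}}.ncard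
      + {i : Fin n | ¬ (c < ⟪u, x i⟫)}.ncard = n := by
    rw [← hcompl, Set.ncard_add_ncard_compl]
    simp
  have hk' : k ≤ {i : Fin n | x i ∈ {y | c < ⟪u, y⟫}}.ncard := by omega
  have hn' : (0:ℝ) < n := by exact_mod_cast hn
  exact (div_le_div_iff_of_pos_right hn').mpr (by exact_mod_cast hk')
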